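/- Let n ≥ 4 be an integer, let s be a real number with 2 ≤ s ≤ n/2, and let μ be a natural number with μ ≤ s. Set d = arccos(−s/(2n)). Then ∫_{−d}^{d} [ n! · 4^n / ∏_{k=0}^{n} |2n·e^{iθ} − k| ] · |(2n·e^{iθ} − 2n)/n|^{μ} · 2n dθ < 100 · (100·s/n)^{μ/2}. -/

import Mathlib

set_option maxHeartbeats 1000000

open Finset MeasureTheory


open Finset in
lemma aux_cb : ∀ n : ℕ, 1 ≤ n → 16 ^ n ≤ 4 * n * (Nat.centralBinom n)^2 := by
  intro n hn
  induction n with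
  | zero => omega
  | succ m ih =>
    rcases Nat.eq_zero_or_pos m with hm | hm
    · subst hm; decide
    have h1 := ih hm
    have key := Nat.succ_mul_centralBinom_succ m
    have hpos : 0 < (m+1)^2 := by positivity
    refine Nat.le_of_mul_le_mul_left ?_ hpos
    have h2 : (m+1)^2 * (4*(m+1)*(Nat.centralBinom (m+1))^2)
        = 4*(m+1)*(2*(2*m+1)*Nat.centralBinom m)^2 := by
      rw [← key]; ring
    rw [h2]
    calc (m+1)^2 * 16^(m+1) = 16*(m+1)^2 * 16^m := by ring
    _ ≤ 16*(m+1)^2 * (4*m*(Nat.centralBinom m)^2) := Nat.mul_le_mul_left _ h1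
    _ ≤ 4*(m+1)*(2*(2*m+1)*Nat.centralBinom m)^2 := by nlinarith [sq_nonneg (Nat.centralBinom m)]

lemma aux_exp {x : ℝ} (h0 : 0 ≤ x) (h1 : x ≤ 1) : Real.exp x ≤ 1 + x + x^2 := by
  have h := Real.exp_bound (x := x) (by rwa [abs_of_nonneg h0]) (n := 2) (by norm_num)
  have hs : ∑ i ∈ Finset.range 2, x ^ i / (Nat.factorial i : ℝ) = 1 + x := by
    simp [Finset.sum_range_succ]
  rw [hs, abs_of_nonneg h0] at h
  have h2 := (abs_le.mp h).2
  norm_num [Nat.factorial] at h2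
  nlinarith [sq_nonneg x]


lemma aux_moment (μ : ℕ) {β : ℝ} (hβ : 0 < β) (x : ℝ) :
    |x| ^ μ * Real.exp (-(β * x^2)) ≤ ((μ:ℝ)/(2 * Real.exp 1 * β)) ^ ((μ:ℝ)/2) := by
  rcases Nat.eq_zero_or_pos μ with hμ | hμ
  · subst hμ
    simp only [pow_zero, Nat.cast_zero, one_mul]
    rw [show (0:ℝ)/2 = 0 by norm_num, Real.rpow_zero]
    exact Real.exp_le_one_iff.mpr (by positivity |> neg_nonpos_of_nonneg)
  rcases eq_or_ne x 0 with hx | hx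
  · subst hx
    rw [abs_zero, zero_pow (by omega), zero_mul]
    positivity
  have hx2 : (0:ℝ) < x^2 := by positivity
  set m : ℝ := (μ:ℝ)/2 with hm
  have hm0 : 0 < m := by positivity
  set y : ℝ := β * x^2 with hy
  have hy0 : 0 < y := by positivity
  have h1 : Real.exp 1 * (y/m) ≤ Real.exp (y/m) := by
    have h := Real.add_one_le_exp (y/m - 1)
    have h2 : y/m ≤ Real.exp (y/m - 1) := by linarith
    have h3 : Real.exp (y/m - 1) * Real.exp 1 = Real.exp (y/m) := by
      rw [← Real.exp_add]; ring_nf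
    nlinarith [Real.exp_pos 1, div_pos hy0 hm0]
  have h4 : (Real.exp 1 * (y/m)) ^ m ≤ Real.exp y := by
    calc (Real.exp 1 * (y/m)) ^ m ≤ (Real.exp (y/m)) ^ m :=
          Real.rpow_le_rpow (by positivity) h1 hm0.le
    _ = Real.exp y := by
        rw [← Real.exp_mul, div_mul_cancel₀]
        exact hm0.ne'
  have h5 : |x| ^ μ = (x^2) ^ m := by
    rw [← sq_abs x, ← Real.rpow_natCast |x| 2, ← Real.rpow_mul (abs_nonneg x),
      ← Real.rpow_natCast |x| μ]
    congr 1
    push_cast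
    rw [hm]; ring
  have hsplit : (x^2:ℝ) = (Real.exp 1 * (y/m)) * (m/(Real.exp 1 * β)) := by
    field_simp [hy]
    ring
  have h6 : (x^2) ^ m = (Real.exp 1 * (y/m)) ^ m * (m/(Real.exp 1 * β)) ^ m := by
    rw [hsplit, Real.mul_rpow (by positivity) (by positivity)]
  have h7 : (m/(Real.exp 1 * β)) = (μ:ℝ)/(2 * Real.exp 1 * β) := by
    rw [hm]; ring
  have hB : (0:ℝ) ≤ ((μ:ℝ)/(2*Real.exp 1*β)) ^ m := Real.rpow_nonneg (by positivity) m
  rw [h5, h6, h7, Real.exp_neg]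
  calc (Real.exp 1 * (y/m)) ^ m * ((μ:ℝ)/(2*Real.exp 1*β)) ^ m * (Real.exp y)⁻¹
      ≤ Real.exp y * (((μ:ℝ)/(2*Real.exp 1*β)) ^ m) * (Real.exp y)⁻¹ := by
        apply mul_le_mul_of_nonneg_right _ (by positivity)
        exact mul_le_mul_of_nonneg_right h4 hB
  _ = ((μ:ℝ)/(2*Real.exp 1*β)) ^ m := by
        field_simp


lemma aux_prod_asc (n k : ℕ) : ∏ j ∈ range k, (n + j) = n.ascFactorial k := by
  induction k with
  | zero => simp [Nat.ascFactorial]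
  | succ m ih => rw [prod_range_succ, ih, Nat.ascFactorial, mul_comm]

lemma aux_prod_fact (n : ℕ) (hn : 1 ≤ n) :
    (n-1).factorial * ∏ k ∈ range (n+1), (2*n - k) = (2*n).factorial := by
  have h1 : ∏ k ∈ range (n+1), (2*n - k) = ∏ j ∈ range (n+1), (n + j) := by
    rw [← prod_range_reflect (fun j => n + j) (n+1)]
    apply prod_congr rfl
    intro k hk
    rw [mem_range] at hk
    omega
  rw [h1, aux_prod_asc]
  have h2 := Nat.factorial_mul_ascFactorial (n-1) (n+1)
  have h3 : n - 1 + 1 = n := by omega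
  have h4 : n - 1 + (n + 1) = 2*n := by omega
  rw [h3, h4] at h2
  exact h2


lemma aux_fact (n : ℕ) (hn : 1 ≤ n) :
    (n.factorial : ℝ) * 4^n * Real.sqrt n ≤
      2 * ∏ k ∈ range (n+1), ((2*n : ℝ) - k) := by
  have hc : ∏ k ∈ range (n+1), ((2*n : ℝ) - k) =
      ((∏ k ∈ range (n+1), (2*n - k) : ℕ) : ℝ) := by
    rw [Nat.cast_prod]
    apply prod_congr rfl
    intro k hk
    rw [mem_range] at hk
    have : k ≤ 2*n := by omega
    push_cast [this]
    ring
  -- Pn = centralBinom n * n * n!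
  have h1 := aux_prod_fact n hn
  have h2 : Nat.centralBinom n * n.factorial * n.factorial = (2*n).factorial := by
    have h := Nat.choose_mul_factorial_mul_factorial (show n ≤ 2*n by omega)
    rw [show 2*n - n = n by omega] at h
    rw [Nat.centralBinom_eq_two_mul_choose]
    exact h
  have h3 : n.factorial = n * (n-1).factorial := by
    conv_lhs => rw [show n = (n-1)+1 by omega]
    rw [Nat.factorial_succ]
    congr 1
    omega
  have hP : ∏ k ∈ range (n+1), (2*n - k) = Nat.centralBinom n * n * n.factorial := by
    have hpos : 0 < (n-1).factorial := Nat.factorial_pos _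
    apply Nat.eq_of_mul_eq_mul_left hpos
    rw [h1, ← h2]
    rw [h3]
    ring
  -- real inequality
  rw [hc, hP]
  push_cast
  have hC : (0:ℝ) < Nat.centralBinom n := by exact_mod_cast Nat.centralBinom_pos n
  have hN : (0:ℝ) < n := by exact_mod_cast hn
  have hF : (0:ℝ) < n.factorial := by exact_mod_cast Nat.factorial_pos n
  have key : (16:ℝ)^n ≤ 4 * n * (Nat.centralBinom n : ℝ)^2 := by
    exact_mod_cast aux_cb n hn
  -- suffices 4^n * sqrt n ≤ 2 * centralBinom n * n
  have h5 : (4:ℝ)^n * Real.sqrt n ≤ 2 * (Nat.centralBinom n * n) := by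
    have hs : Real.sqrt ((16:ℝ)^n * n) ≤ Real.sqrt ((2 * (Nat.centralBinom n * n))^2) := by
      apply Real.sqrt_le_sqrt
      nlinarith
    rw [Real.sqrt_sq (by positivity)] at hs
    calc (4:ℝ)^n * Real.sqrt n = Real.sqrt ((16:ℝ)^n * n) := by
          rw [Real.sqrt_mul (by positivity), show (16:ℝ) = 4^2 by norm_num, ← pow_mul,
            mul_comm 2 n, pow_mul, Real.sqrt_sq (by positivity)]
    _ ≤ _ := hs
  calc (n.factorial : ℝ) * 4^n * Real.sqrt n = (4^n * Real.sqrt n) * n.factorial := by ring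
  _ ≤ (2 * (Nat.centralBinom n * n)) * n.factorial := by
      exact mul_le_mul_of_nonneg_right h5 hF.le
  _ = 2 * (Nat.centralBinom n * n * n.factorial) := by ring



lemma aux_sin_sq (y : ℝ) : Real.sin y ^ 2 ≤ y ^ 2 := by
  have key : ∀ z : ℝ, 0 ≤ z → Real.sin z ^ 2 ≤ z ^ 2 := by
    intro z hz
    have h1 : Real.sin z ≤ z := Real.sin_le hz
    rcases le_total z 1 with h | h
    · have h2 : 0 ≤ Real.sin z :=
        Real.sin_nonneg_of_nonneg_of_le_pi hz (h.trans (by linarith [Real.pi_gt_three]))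
      nlinarith
    · nlinarith [Real.neg_one_le_sin z]
  rcases le_total 0 y with h | h
  · exact key y h
  · have := key (-y) (by linarith)
    rw [Real.sin_neg] at this
    nlinarith [this]


lemma aux_numfac (θ : ℝ) (n : ℕ) (hn : 4 ≤ n) :
    ‖(2 * (n : ℂ) * Complex.exp (θ * Complex.I) - 2 * n) / n‖ ≤ 2 * |θ| := by
  have hN : (0:ℝ) < n := by
    have : (4:ℝ) ≤ n := by exact_mod_cast hn
    linarith
  have he : (2 * (n : ℂ) * Complex.exp (θ * Complex.I) - 2 * n) / n
      = 2 * (Complex.exp (θ * Complex.I) - 1) * ((n:ℂ)/n) := by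
    field_simp
  have hn' : ((n:ℂ)/n) = 1 := div_self (by exact_mod_cast hN.ne')
  rw [he, hn', mul_one, norm_mul]
  have h2 : ‖(2:ℂ)‖ = 2 := by norm_num
  rw [h2]
  have key : ‖Complex.exp (θ * Complex.I) - 1‖ ≤ |θ| := by
    have hid : (‖Complex.exp (θ * Complex.I) - 1‖)^2 = 2*(1 - Real.cos θ) := by
      have he2 : Complex.exp (θ * Complex.I) - 1
          = Complex.ofReal (Real.cos θ - 1) + Complex.ofReal (Real.sin θ) * Complex.I := by
        rw [Complex.exp_mul_I, ← Complex.ofReal_cos, ← Complex.ofReal_sin]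
        push_cast
        ring
      rw [he2, Complex.sq_norm, Complex.normSq_add_mul_I]
      nlinarith [Real.sin_sq_add_cos_sq θ]
    have hhalf : 1 - Real.cos θ ≤ θ^2/2 := by
      have hs := Real.sin_sq_eq_half_sub (θ/2)
      rw [show 2*(θ/2) = θ by ring] at hs
      nlinarith [aux_sin_sq (θ/2)]
    have : (‖Complex.exp (θ * Complex.I) - 1‖)^2 ≤ |θ|^2 := by
      rw [hid, sq_abs]; nlinarith
    nlinarith [norm_nonneg (Complex.exp (θ * Complex.I) - 1), abs_nonneg θ]
  nlinarith [abs_nonneg θ]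



lemma aux_pointwise (n μ : ℕ) (hn : 4 ≤ n) (θ : ℝ) (hθ : |θ| ≤ Real.pi) :
    (Nat.factorial n : ℝ) * 4 ^ n /
        (∏ k ∈ Finset.range (n + 1),
          ‖2 * (n : ℂ) * Complex.exp (θ * Complex.I) - k‖) *
      (‖(2 * (n : ℂ) * Complex.exp (θ * Complex.I) - 2 * n) / n‖) ^ μ *
      (2 * (n : ℝ)) ≤
    4 * Real.sqrt n * (2*|θ|)^μ * Real.exp (-(2*(n:ℝ)/(9*Real.pi^2) * θ^2)) := by
  have hN : (0:ℝ) < n := by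
    have : (4:ℝ) ≤ n := by exact_mod_cast hn
    linarith
  set t : ℝ := 1 - Real.cos θ with htdef
  clear_value t
  have ht0 : 0 ≤ t := by have := Real.cos_le_one θ; simp [htdef]; linarith
  have ht2 : t ≤ 2 := by have := Real.neg_one_le_cos θ; simp [htdef]; linarith
  -- abbreviations
  set P : ℝ := ∏ k ∈ Finset.range (n + 1),
      ‖2 * (n : ℂ) * Complex.exp (θ * Complex.I) - k‖ with hPdef
  set R : ℝ := ∏ k ∈ Finset.range (n + 1), ((2*n : ℝ) - k) with hRdef
  have hR0 : 0 < R := by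
    apply Finset.prod_pos
    intro k hk
    rw [Finset.mem_range] at hk
    have : (k:ℝ) ≤ n := by exact_mod_cast Nat.lt_succ_iff.mp hk
    linarith
  -- Step A : per-factor identity
  have habs2 : ∀ k ∈ Finset.range (n+1),
      (‖2 * (n : ℂ) * Complex.exp (θ * Complex.I) - k‖)^2
        = ((2*n:ℝ) - k)^2 + 4*n*k*t := by
    intro k _
    have he : 2 * (n : ℂ) * Complex.exp (θ * Complex.I) - k
        = Complex.ofReal (2*n*Real.cos θ - k) + Complex.ofReal (2*n*Real.sin θ) * Complex.I := by
      rw [Complex.exp_mul_I, ← Complex.ofReal_cos, ← Complex.ofReal_sin]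
      push_cast
      ring
    rw [he, Complex.sq_norm, Complex.normSq_add_mul_I, htdef]
    linear_combination (4*(n:ℝ)^2) * Real.sin_sq_add_cos_sq θ
  -- Step B : product lower bound with ite
  set m : ℕ := ((Finset.range (n+1)).filter (fun k => n ≤ 2*k)).card with hmdef
  have hm : (n:ℝ) ≤ 2*m := by
    have hfe : (Finset.range (n+1)).filter (fun k => n ≤ 2*k) = Finset.Ico ((n+1)/2) (n+1) := by
      ext k
      simp only [Finset.mem_filter, Finset.mem_range, Finset.mem_Ico]
      omega
    have : n ≤ 2 * m := by
      rw [hmdef, hfe, Nat.card_Ico]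
      omega
    exact_mod_cast this
  have hprodsq : R^2 * (1 + 8/9*t)^m ≤ P^2 := by
    have e1 : ∏ k ∈ Finset.range (n+1),
        (((2*n:ℝ) - k)^2 * (if n ≤ 2*k then 1 + 8/9*t else 1)) = R^2 * (1 + 8/9*t)^m := by
      rw [Finset.prod_mul_distrib, Finset.prod_pow, Finset.prod_ite,
        Finset.prod_const, Finset.prod_const, one_pow, mul_one, hRdef, hmdef]
    have e2 : P^2 = ∏ k ∈ Finset.range (n+1),
        (‖2 * (n : ℂ) * Complex.exp (θ * Complex.I) - k‖)^2 := by
      rw [hPdef]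
      exact (Finset.prod_pow _ _ _).symm
    calc R^2 * (1 + 8/9*t)^m
        = ∏ k ∈ Finset.range (n+1),
            (((2*n:ℝ) - k)^2 * (if n ≤ 2*k then 1 + 8/9*t else 1)) := e1.symm
    _ ≤ ∏ k ∈ Finset.range (n+1), (((2*n:ℝ) - k)^2 + 4*n*k*t) := by
        apply Finset.prod_le_prod
        · intro k hk
          positivity
        · intro k hk
          rw [Finset.mem_range] at hk
          have hk' : (k:ℝ) ≤ n := by exact_mod_cast Nat.lt_succ_iff.mp hk
          split_ifs with h
          · have h' : (n:ℝ) ≤ 2*k := by exact_mod_cast h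
            nlinarith [mul_nonneg (mul_nonneg
              (by linarith : (0:ℝ) ≤ 2*(k:ℝ) - n) (by linarith : (0:ℝ) ≤ 8*(n:ℝ) - k)) ht0]
          · nlinarith [mul_nonneg (mul_nonneg hN.le (Nat.cast_nonneg k : (0:ℝ) ≤ k)) ht0]
    _ = ∏ k ∈ Finset.range (n+1),
          (‖2 * (n : ℂ) * Complex.exp (θ * Complex.I) - k‖)^2 :=
        (Finset.prod_congr rfl habs2).symm
    _ = P^2 := e2.symm
  -- Step C : (1+8/9 t)^m ≥ exp(2 n t/9)
  have hC : Real.exp (2*n*t/9) ≤ (1 + 8/9*t)^m := by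
    have e1 : Real.exp (4*t/9) ≤ 1 + 8/9*t := by
      have := aux_exp (x := 4*t/9) (by linarith) (by linarith)
      nlinarith
    calc Real.exp (2*n*t/9) ≤ Real.exp (m * (4*t/9)) := by
          apply Real.exp_le_exp.mpr
          nlinarith
    _ = Real.exp (4*t/9) ^ m := Real.exp_nat_mul _ m
    _ ≤ (1 + 8/9*t)^m := pow_le_pow_left₀ (Real.exp_nonneg _) e1 m
  -- Step D : P ≥ Q
  set Q : ℝ := R * Real.exp (n*t/9) with hQdef
  have hQ0 : 0 < Q := by positivity
  have hP0 : 0 ≤ P := by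
    rw [hPdef]; apply Finset.prod_nonneg; intro k _; exact norm_nonneg _
  have hQP : Q ≤ P := by
    have hsq : Q^2 ≤ P^2 := by
      have : Q^2 = R^2 * Real.exp (2*n*t/9) := by
        rw [hQdef, mul_pow, pow_two (Real.exp _), ← Real.exp_add]
        congr 1
        ring
      rw [this]
      calc R^2 * Real.exp (2*n*t/9) ≤ R^2 * (1 + 8/9*t)^m := by
            apply mul_le_mul_of_nonneg_left hC (by positivity)
      _ ≤ P^2 := hprodsq
    nlinarith
  -- Step F : base bound
  have hbase : (Nat.factorial n : ℝ) * 4 ^ n / P ≤ (2/Real.sqrt n) * Real.exp (-(n*t/9)) := by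
    have h1 : (Nat.factorial n : ℝ) * 4 ^ n / P ≤ (Nat.factorial n : ℝ) * 4 ^ n / Q := by
      apply div_le_div_of_nonneg_left (by positivity) hQ0 hQP
    have h2 : (Nat.factorial n : ℝ) * 4 ^ n / Q = ((Nat.factorial n : ℝ) * 4 ^ n / R) * Real.exp (-(n*t/9)) := by
      rw [hQdef, Real.exp_neg]
      field_simp
    have h3 : (Nat.factorial n : ℝ) * 4 ^ n / R ≤ 2/Real.sqrt n := by
      rw [div_le_div_iff₀ hR0 (by positivity : (0:ℝ) < Real.sqrt n)]
      calc (Nat.factorial n : ℝ) * 4 ^ n * Real.sqrt n ≤ 2 * R := aux_fact n (by omega)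
      _ = 2 * R := rfl
    rw [h2] at h1
    calc (Nat.factorial n : ℝ) * 4 ^ n / P
        ≤ ((Nat.factorial n : ℝ) * 4 ^ n / R) * Real.exp (-(n*t/9)) := h1
    _ ≤ (2/Real.sqrt n) * Real.exp (-(n*t/9)) :=
        mul_le_mul_of_nonneg_right h3 (Real.exp_nonneg _)
  -- Step G : numerator factor
  have hB : ‖(2 * (n : ℂ) * Complex.exp (θ * Complex.I) - 2 * n) / n‖ ≤ 2 * |θ| :=
    aux_numfac θ n hn
  -- Step H : combine
  have hBpow : (‖(2 * (n : ℂ) * Complex.exp (θ * Complex.I) - 2 * n) / n‖) ^ μ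
      ≤ (2*|θ|)^μ := pow_le_pow_left₀ (norm_nonneg _) hB μ
  have ht' : 2/Real.pi^2 * θ^2 ≤ t := by
    have := Real.cos_le_one_sub_mul_cos_sq hθ
    rw [htdef]
    linarith
  have hexp2 : Real.exp (-(n*t/9)) ≤ Real.exp (-(2*(n:ℝ)/(9*Real.pi^2) * θ^2)) := by
    apply Real.exp_le_exp.mpr
    have hπ : (0:ℝ) < Real.pi := Real.pi_pos
    have : 2*(n:ℝ)/(9*Real.pi^2) * θ^2 ≤ n*t/9 := by
      rw [div_mul_eq_mul_div, div_le_div_iff₀ (by positivity) (by norm_num)]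
      calc 2*(n:ℝ)*θ^2*9 = 9*n*(2/Real.pi^2*θ^2)*Real.pi^2 := by field_simp
      _ ≤ 9*n*t*Real.pi^2 := by
          apply mul_le_mul_of_nonneg_right _ (by positivity)
          apply mul_le_mul_of_nonneg_left ht' (by positivity)
      _ = n*t*(9*Real.pi^2) := by ring
    linarith
  have hsqrtn : 0 < Real.sqrt n := Real.sqrt_pos.mpr hN
  calc (Nat.factorial n : ℝ) * 4 ^ n / P
        * (‖(2 * (n : ℂ) * Complex.exp (θ * Complex.I) - 2 * n) / n‖) ^ μ
        * (2 * (n : ℝ))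
      ≤ ((2/Real.sqrt n) * Real.exp (-(n*t/9))) * (2*|θ|)^μ * (2 * (n : ℝ)) := by
        apply mul_le_mul_of_nonneg_right _ (by positivity)
        apply mul_le_mul hbase hBpow (by positivity) (by positivity)
  _ = (4 * Real.sqrt n) * (2*|θ|)^μ * Real.exp (-(n*t/9)) := by
        rw [show (2:ℝ)/Real.sqrt n * Real.exp (-(n*t/9)) * (2*|θ|)^μ * (2*n)
            = (4 * (n / Real.sqrt n)) * (2*|θ|)^μ * Real.exp (-(n*t/9)) by ring]
        congr 3
        rw [← Real.sqrt_sq hN.le, Real.sqrt_sq hN.le, Real.div_sqrt]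
  _ ≤ 4 * Real.sqrt n * (2*|θ|)^μ * Real.exp (-(2*(n:ℝ)/(9*Real.pi^2) * θ^2)) := by
        apply mul_le_mul_of_nonneg_left hexp2 (by positivity)



theorem stmt5 (n : ℕ) (hn : 4 ≤ n) (s : ℝ) (hs : 2 ≤ s) (hs' : s ≤ (n : ℝ) / 2)
    (μ : ℕ) (hμ : (μ : ℝ) ≤ s) :
    ∫ θ in (-(Real.arccos (-s / (2 * n))))..(Real.arccos (-s / (2 * n))),
      (Nat.factorial n : ℝ) * 4 ^ n /
          (∏ k ∈ Finset.range (n + 1),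
            ‖2 * (n : ℂ) * Complex.exp (θ * Complex.I) - k‖) *
        (‖(2 * (n : ℂ) * Complex.exp (θ * Complex.I) - 2 * n) / n‖) ^ μ *
        (2 * (n : ℝ)) <
      100 * (100 * s / n) ^ ((μ : ℝ) / 2) := by
  have hN : (0:ℝ) < n := by
    have : (4:ℝ) ≤ n := by exact_mod_cast hn
    linarith
  have hπ : (0:ℝ) < Real.pi := Real.pi_pos
  set d : ℝ := Real.arccos (-s / (2 * n)) with hd
  have hd0 : 0 ≤ d := Real.arccos_nonneg _
  have hdπ : d ≤ Real.pi := Real.arccos_le_pi _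
  set β : ℝ := (n:ℝ)/(9*Real.pi^2) with hβdef
  have hβ : 0 < β := by positivity
  set f : ℝ → ℝ := fun θ =>
      (Nat.factorial n : ℝ) * 4 ^ n /
          (∏ k ∈ Finset.range (n + 1),
            ‖2 * (n : ℂ) * Complex.exp (θ * Complex.I) - k‖) *
        (‖(2 * (n : ℂ) * Complex.exp (θ * Complex.I) - 2 * n) / n‖) ^ μ *
        (2 * (n : ℝ)) with hf
  set A : ℝ := 4 * Real.sqrt n * 2^μ * ((μ:ℝ)/(2 * Real.exp 1 * β)) ^ ((μ:ℝ)/2) with hA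
  have hA0 : 0 ≤ A := by positivity
  set g : ℝ → ℝ := fun θ => A * Real.exp (-(β * θ^2)) with hg
  have hRHSpos : 0 < 100 * (100 * s / n) ^ ((μ : ℝ) / 2) := by
    have : (0:ℝ) < 100 * s / n := by positivity
    positivity
  -- pointwise bound on Icc
  have hpt : ∀ θ ∈ Set.Icc (-d) d, f θ ≤ g θ := by
    intro θ hθ
    obtain ⟨h1, h2⟩ := hθ
    have hθπ : |θ| ≤ Real.pi := by
      rw [abs_le]; constructor <;> linarith
    refine (aux_pointwise n μ hn θ hθπ).trans ?_
    have key := aux_moment μ hβ θ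
    have e1 : Real.exp (-(2*(n:ℝ)/(9*Real.pi^2) * θ^2))
        = Real.exp (-(β * θ^2)) * Real.exp (-(β * θ^2)) := by
      rw [← Real.exp_add]
      congr 1
      rw [hβdef]
      ring
    have e2 : (2*|θ|)^μ = 2^μ * |θ|^μ := by rw [mul_pow]
    rw [hg, hA, e1, e2]
    calc 4 * Real.sqrt n * (2^μ * |θ|^μ) * (Real.exp (-(β * θ^2)) * Real.exp (-(β * θ^2)))
        = (4 * Real.sqrt n * 2^μ) * (|θ|^μ * Real.exp (-(β * θ^2))) * Real.exp (-(β * θ^2)) := by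
          ring
    _ ≤ (4 * Real.sqrt n * 2^μ) * (((μ:ℝ)/(2 * Real.exp 1 * β)) ^ ((μ:ℝ)/2)) * Real.exp (-(β * θ^2)) := by
          apply mul_le_mul_of_nonneg_right _ (Real.exp_nonneg _)
          apply mul_le_mul_of_nonneg_left key (by positivity)
    _ = 4 * Real.sqrt n * 2^μ * ((μ:ℝ)/(2 * Real.exp 1 * β)) ^ ((μ:ℝ)/2) * Real.exp (-(β * θ^2)) := by
          ring
  -- integrability of g
  have hgint : Integrable g := by
    rw [hg]
    have : Integrable (fun θ : ℝ => Real.exp (-β * θ^2)) := integrable_exp_neg_mul_sq hβ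
    simp only [neg_mul] at this ⊢
    exact this.const_mul A
  have hgnn : ∀ θ : ℝ, 0 ≤ g θ := fun θ => by rw [hg]; positivity
  by_cases hfin : IntervalIntegrable f volume (-d) d
  · calc ∫ θ in (-d)..d, f θ ≤ ∫ θ in (-d)..d, g θ := by
          apply intervalIntegral.integral_mono_on (by linarith) hfin
            (hgint.intervalIntegrable) hpt
    _ ≤ ∫ θ : ℝ, g θ := by
          rw [intervalIntegral.integral_of_le (by linarith : -d ≤ d)]
          exact setIntegral_le_integral hgint (Filter.Eventually.of_forall hgnn)
    _ = A * Real.sqrt (Real.pi / β) := by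
          rw [hg, MeasureTheory.integral_const_mul]
          congr 1
          have := integral_gaussian β
          simp only [neg_mul] at this
          exact this
    _ < 100 * (100 * s / n) ^ ((μ : ℝ) / 2) := by
          have hsn : (0:ℝ) < Real.sqrt n := Real.sqrt_pos.mpr hN
          have hsq : Real.sqrt (Real.pi/β) = Real.sqrt (9*Real.pi^3) / Real.sqrt n := by
            rw [show Real.pi/β = (9*Real.pi^3)/(n:ℝ) by rw [hβdef]; field_simp,
              Real.sqrt_div (by positivity) _]
          have e4 : (2:ℝ)^μ = (4:ℝ)^((μ:ℝ)/2) := by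
            rw [show (4:ℝ) = (2:ℝ)^(2:ℝ) by
                  rw [show (2:ℝ) = ((2:ℕ):ℝ) by norm_num, Real.rpow_natCast]; norm_num,
              ← Real.rpow_mul (by norm_num : (0:ℝ) ≤ 2)]
            rw [show (2:ℝ) * ((μ:ℝ)/2) = (μ:ℝ) by ring, Real.rpow_natCast]
          have hC : (2:ℝ)^μ * ((μ:ℝ)/(2 * Real.exp 1 * β)) ^ ((μ:ℝ)/2)
              ≤ (100 * s / n) ^ ((μ : ℝ) / 2) := by
            rw [e4, ← Real.mul_rpow (by norm_num) (by positivity)]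
            apply Real.rpow_le_rpow (by positivity) _ (by positivity)
            rw [hβdef]
            have hbase : 4 * ((μ:ℝ)/(2 * Real.exp 1 * ((n:ℝ)/(9*Real.pi^2))))
                = 18 * Real.pi^2 * μ / (Real.exp 1 * n) := by
              field_simp
              ring
            rw [hbase, div_le_div_iff₀ (by positivity) hN]
            have hpi : Real.pi < 3.15 := Real.pi_lt_d2
            have hexp : (2.7182818283:ℝ) < Real.exp 1 := Real.exp_one_gt_d9
            have hμ0 : (0:ℝ) ≤ (μ:ℝ) := Nat.cast_nonneg μ
            have k1 : 18*Real.pi^2 ≤ 100 * Real.exp 1 := by nlinarith [Real.pi_pos]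
            have k2 : 18*Real.pi^2*(μ:ℝ) ≤ 100*Real.exp 1 * s := by
              nlinarith [mul_le_mul_of_nonneg_right k1 hμ0,
                mul_le_mul_of_nonneg_left hμ (by positivity : (0:ℝ) ≤ 100 * Real.exp 1)]
            nlinarith [mul_le_mul_of_nonneg_right k2 hN.le]
          have hB1 : 4 * Real.sqrt (9*Real.pi^3) < 100 := by
            have h625 : 9*Real.pi^3 < 625 := by
              nlinarith [Real.pi_lt_d2, Real.pi_pos]
            have h2 : Real.sqrt (9*Real.pi^3) < 25 :=
              (Real.sqrt_lt' (by norm_num : (0:ℝ) < 25)).mpr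
                (by rw [show (25:ℝ)^2 = 625 by norm_num]; exact h625)
            linarith
          have hre : A * Real.sqrt (Real.pi / β)
              = (4 * Real.sqrt (9*Real.pi^3)) * ((2:ℝ)^μ * ((μ:ℝ)/(2 * Real.exp 1 * β)) ^ ((μ:ℝ)/2)) := by
            rw [hA, hsq]
            field_simp
          rw [hre]
          calc (4 * Real.sqrt (9*Real.pi^3)) * ((2:ℝ)^μ * ((μ:ℝ)/(2 * Real.exp 1 * β)) ^ ((μ:ℝ)/2))
              ≤ (4 * Real.sqrt (9*Real.pi^3)) * ((100 * s / n) ^ ((μ : ℝ) / 2)) := by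
                apply mul_le_mul_of_nonneg_left hC (by positivity)
          _ < 100 * (100 * s / n) ^ ((μ : ℝ) / 2) := by
                apply mul_lt_mul_of_pos_right hB1
                apply Real.rpow_pos_of_pos (by positivity)
  · rw [intervalIntegral.integral_undef hfin]
    exact hRHSpos
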